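/- Let G be a finite simple graph with vertex set V. For every vertex v: the sum over all neighbors a of v of ( n3(a) − n3(v,a) ) equals F8(v) + 2·F9(v) + 3·F10(v). -/

import Mathlib

open Finset
open scoped Classical

namespace FourProfiles

variable {V : Type*} [Fintype V] [DecidableEq V]

/-- Number of 3-element subsets of `V \ {v}` admitting a labeling `a, b, c` satisfying `P`. -/
noncomputable def cnt3 (v : V) (P : V → V → V → Prop) : ℕ :=
  (((Finset.univ : Finset V).powersetCard 3).filter
    (fun s => v ∉ s ∧ ∃ a ∈ s, ∃ b ∈ s, ∃ c ∈ s, s = {a, b, c} ∧ P a b c)).card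

variable (G : SimpleGraph V)

/-- Induced subgraph on `{v,a,b,c}` has exactly one edge, with `v` an endpoint. -/
noncomputable def F1 (v : V) : ℕ := cnt3 v fun a b c =>
  G.Adj v a ∧ ¬G.Adj v b ∧ ¬G.Adj v c ∧ ¬G.Adj a b ∧ ¬G.Adj a c ∧ ¬G.Adj b c

/-- Induced subgraph on `{v,a,b,c}` is a perfect matching (two disjoint edges). -/
noncomputable def F2 (v : V) : ℕ := cnt3 v fun a b c =>
  G.Adj v a ∧ G.Adj b c ∧ ¬G.Adj v b ∧ ¬G.Adj v c ∧ ¬G.Adj a b ∧ ¬G.Adj a c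

/-- Two-edge path plus isolated vertex, `v` an endpoint of the path. -/
noncomputable def F3 (v : V) : ℕ := cnt3 v fun a b c =>
  G.Adj v a ∧ G.Adj a b ∧ ¬G.Adj v b ∧ ¬G.Adj v c ∧ ¬G.Adj a c ∧ ¬G.Adj b c

/-- Two-edge path plus isolated vertex, `v` the middle vertex of the path. -/
noncomputable def F3' (v : V) : ℕ := cnt3 v fun a b c =>
  G.Adj v a ∧ G.Adj v b ∧ ¬G.Adj a b ∧ ¬G.Adj v c ∧ ¬G.Adj a c ∧ ¬G.Adj b c

/-- Path on four vertices, `v` an endpoint. -/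
noncomputable def F4 (v : V) : ℕ := cnt3 v fun a b c =>
  G.Adj v a ∧ G.Adj a b ∧ G.Adj b c ∧ ¬G.Adj v b ∧ ¬G.Adj v c ∧ ¬G.Adj a c

/-- Path on four vertices, `v` an internal (degree-2) vertex. -/
noncomputable def F4' (v : V) : ℕ := cnt3 v fun a b c =>
  G.Adj v a ∧ G.Adj v b ∧ G.Adj b c ∧ ¬G.Adj a b ∧ ¬G.Adj v c ∧ ¬G.Adj a c

/-- Triangle plus isolated vertex, `v` in the triangle. -/
noncomputable def F5 (v : V) : ℕ := cnt3 v fun a b c =>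
  G.Adj v a ∧ G.Adj v b ∧ G.Adj a b ∧ ¬G.Adj v c ∧ ¬G.Adj a c ∧ ¬G.Adj b c

/-- Star `K_{1,3}`, `v` a leaf. -/
noncomputable def F6 (v : V) : ℕ := cnt3 v fun a b c =>
  G.Adj v a ∧ G.Adj a b ∧ G.Adj a c ∧ ¬G.Adj v b ∧ ¬G.Adj v c ∧ ¬G.Adj b c

/-- Star `K_{1,3}`, `v` the center. -/
noncomputable def F6' (v : V) : ℕ := cnt3 v fun a b c =>
  G.Adj v a ∧ G.Adj v b ∧ G.Adj v c ∧ ¬G.Adj a b ∧ ¬G.Adj a c ∧ ¬G.Adj b c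

/-- 4-cycle. -/
noncomputable def F7 (v : V) : ℕ := cnt3 v fun a b c =>
  G.Adj v a ∧ G.Adj a b ∧ G.Adj b c ∧ G.Adj v c ∧ ¬G.Adj v b ∧ ¬G.Adj a c

/-- Paw (triangle with a pendant edge), `v` the pendant (degree-1) vertex. -/
noncomputable def F8 (v : V) : ℕ := cnt3 v fun a b c =>
  G.Adj v a ∧ G.Adj a b ∧ G.Adj a c ∧ G.Adj b c ∧ ¬G.Adj v b ∧ ¬G.Adj v c

/-- Paw, `v` the degree-3 vertex. -/
noncomputable def F8' (v : V) : ℕ := cnt3 v fun a b c =>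
  G.Adj v a ∧ G.Adj v b ∧ G.Adj a b ∧ G.Adj v c ∧ ¬G.Adj a c ∧ ¬G.Adj b c

/-- Paw, `v` one of the two degree-2 vertices. -/
noncomputable def F8'' (v : V) : ℕ := cnt3 v fun a b c =>
  G.Adj v a ∧ G.Adj v b ∧ G.Adj a b ∧ G.Adj a c ∧ ¬G.Adj v c ∧ ¬G.Adj b c

/-- Diamond (`K4` minus one edge), `v` one of the two degree-2 vertices. -/
noncomputable def F9 (v : V) : ℕ := cnt3 v fun a b c =>
  G.Adj v a ∧ G.Adj v b ∧ G.Adj a b ∧ G.Adj a c ∧ G.Adj b c ∧ ¬G.Adj v c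

/-- Diamond, `v` one of the two degree-3 vertices. -/
noncomputable def F9' (v : V) : ℕ := cnt3 v fun a b c =>
  G.Adj v a ∧ G.Adj v b ∧ G.Adj v c ∧ G.Adj a b ∧ G.Adj a c ∧ ¬G.Adj b c

/-- Complete graph `K4`. -/
noncomputable def F10 (v : V) : ℕ := cnt3 v fun a b c =>
  G.Adj v a ∧ G.Adj v b ∧ G.Adj v c ∧ G.Adj a b ∧ G.Adj a c ∧ G.Adj b c

/-- `|V \ (Γ(v) ∪ Γ(a))|`. -/
noncomputable def n1e (v a : V) : ℕ :=
  (Finset.univ.filter fun x => ¬G.Adj v x ∧ ¬G.Adj a x).card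

/-- `|Γ(v) \ (Γ(a) ∪ {a})|`. -/
noncomputable def n2c (v a : V) : ℕ :=
  (Finset.univ.filter fun x => G.Adj v x ∧ ¬G.Adj a x ∧ x ≠ a).card

/-- `|Γ(a) \ (Γ(v) ∪ {v})|`. -/
noncomputable def n2e (v a : V) : ℕ :=
  (Finset.univ.filter fun x => G.Adj a x ∧ ¬G.Adj v x ∧ x ≠ v).card

/-- `|Γ(v) ∩ Γ(a)|`. -/
noncomputable def n3 (v a : V) : ℕ :=
  (Finset.univ.filter fun x => G.Adj v x ∧ G.Adj a x).card

/-- Number of edges of `G` with neither endpoint in `Γ(v) ∪ {v}`. -/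
noncomputable def n1d (v : V) : ℕ :=
  (((Finset.univ : Finset V).powersetCard 2).filter
    (fun s => ∃ a ∈ s, ∃ b ∈ s, s = {a, b} ∧ G.Adj a b ∧
      ¬G.Adj v a ∧ ¬G.Adj v b ∧ a ≠ v ∧ b ≠ v)).card

/-- Number of triangles of `G` containing `a`. -/
noncomputable def tri (a : V) : ℕ :=
  (((Finset.univ : Finset V).powersetCard 2).filter
    (fun s => ∃ x ∈ s, ∃ y ∈ s, s = {x, y} ∧ G.Adj a x ∧ G.Adj a y ∧ G.Adj x y)).card

/-- Number of 2-element subsets `{x,y}` of `V \ {a}` inducing a two-edge path with `a`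
an endpoint. -/
noncomputable def twoPathEnd (a : V) : ℕ :=
  (((Finset.univ : Finset V).powersetCard 2).filter
    (fun s => a ∉ s ∧ ∃ x ∈ s, ∃ y ∈ s, s = {x, y} ∧ G.Adj a x ∧ G.Adj x y ∧ ¬G.Adj a y)).card

/-- Number of 2-element subsets `{b,c} ⊆ Γ(a)` with `b` adjacent to `c`, `b ∈ Γ(v)`,
`c ∈ Γ(v)`. -/
noncomputable def triIn (v a : V) : ℕ :=
  (((Finset.univ : Finset V).powersetCard 2).filter
    (fun s => ∃ b ∈ s, ∃ c ∈ s, s = {b, c} ∧ G.Adj a b ∧ G.Adj a c ∧ G.Adj b c ∧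
      G.Adj v b ∧ G.Adj v c)).card

/-- Number of 2-element subsets `{b,c} ⊆ Γ(a)` with `b` adjacent to `c`, `b ∉ Γ(v)`,
`c ∉ Γ(v)`. -/
noncomputable def triOut (v a : V) : ℕ :=
  (((Finset.univ : Finset V).powersetCard 2).filter
    (fun s => ∃ b ∈ s, ∃ c ∈ s, s = {b, c} ∧ G.Adj a b ∧ G.Adj a c ∧ G.Adj b c ∧
      ¬G.Adj v b ∧ ¬G.Adj v c)).card

/-! ### Auxiliary machinery for `statement14` -/

section Aux

lemma pair_perm14 {p q x y : V} (hpq : p ≠ q) (h : ({p, q} : Finset V) = {x, y}) :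
    (p = x ∧ q = y) ∨ (p = y ∧ q = x) := by
  have hp : p = x ∨ p = y := by
    have : p ∈ ({x, y} : Finset V) := by rw [← h]; simp
    simpa using this
  have hq : q = x ∨ q = y := by
    have : q ∈ ({x, y} : Finset V) := by rw [← h]; simp
    simpa using this
  rcases hp with rfl | rfl <;> rcases hq with h1 | h1 <;> tauto

lemma triple_perm14 {p q r x y z : V} (h1 : p ≠ q) (h2 : p ≠ r) (h3 : q ≠ r)
    (h : ({p, q, r} : Finset V) = {x, y, z}) :
    (p = x ∧ q = y ∧ r = z) ∨ (p = x ∧ q = z ∧ r = y) ∨ (p = y ∧ q = x ∧ r = z) ∨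
      (p = y ∧ q = z ∧ r = x) ∨ (p = z ∧ q = x ∧ r = y) ∨ (p = z ∧ q = y ∧ r = x) := by
  have hp : p = x ∨ p = y ∨ p = z := by
    have : p ∈ ({x, y, z} : Finset V) := by rw [← h]; simp
    simpa using this
  have hq : q = x ∨ q = y ∨ q = z := by
    have : q ∈ ({x, y, z} : Finset V) := by rw [← h]; simp
    simpa using this
  have hr : r = x ∨ r = y ∨ r = z := by
    have : r ∈ ({x, y, z} : Finset V) := by rw [← h]; simp
    simpa using this
  clear h
  rcases hp with rfl | rfl | rfl <;> rcases hq with rfl | rfl | rfl <;>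
    rcases hr with rfl | rfl | rfl <;> simp_all

/-- ordered pairs `(b,c)` forming a triangle with `a`, avoiding `v`. -/
noncomputable def Pnov14 (v a : V) : Finset (V × V) :=
  univ.filter fun p => G.Adj a p.1 ∧ G.Adj a p.2 ∧ G.Adj p.1 p.2 ∧ p.1 ≠ v ∧ p.2 ≠ v

/-- ordered triples `(a,b,c)`: `a ∈ Γ(v)`, triangle `abc` avoiding `v`. -/
noncomputable def T314 (v : V) : Finset (V × V × V) :=
  univ.filter fun t => G.Adj v t.1 ∧ G.Adj t.1 t.2.1 ∧ G.Adj t.1 t.2.2 ∧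
    G.Adj t.2.1 t.2.2 ∧ t.2.1 ≠ v ∧ t.2.2 ≠ v

/-- ordered triples satisfying `P` with underlying set avoiding `v`. -/
noncomputable def Wf14 (v : V) (P : V → V → V → Prop) : Finset (V × V × V) :=
  univ.filter fun t => P t.1 t.2.1 t.2.2 ∧ v ∉ ({t.1, t.2.1, t.2.2} : Finset V)

def P8pred (v : V) : V → V → V → Prop := fun a b c =>
  G.Adj v a ∧ G.Adj a b ∧ G.Adj a c ∧ G.Adj b c ∧ ¬G.Adj v b ∧ ¬G.Adj v c

def P9pred (v : V) : V → V → V → Prop := fun a b c =>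
  G.Adj v a ∧ G.Adj v b ∧ G.Adj a b ∧ G.Adj a c ∧ G.Adj b c ∧ ¬G.Adj v c

def P10pred (v : V) : V → V → V → Prop := fun a b c =>
  G.Adj v a ∧ G.Adj v b ∧ G.Adj v c ∧ G.Adj a b ∧ G.Adj a c ∧ G.Adj b c

lemma F8_eq14 (v : V) : F8 G v = cnt3 v (P8pred G v) := rfl
lemma F9_eq14 (v : V) : F9 G v = cnt3 v (P9pred G v) := rfl
lemma F10_eq14 (v : V) : F10 G v = cnt3 v (P10pred G v) := rfl

lemma tri_two14 (a : V) :
    (univ.filter fun p : V × V => G.Adj a p.1 ∧ G.Adj a p.2 ∧ G.Adj p.1 p.2).card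
      = 2 * tri G a := by
  classical
  have hmem : ∀ p ∈ (univ.filter fun p : V × V => G.Adj a p.1 ∧ G.Adj a p.2 ∧ G.Adj p.1 p.2),
      ({p.1, p.2} : Finset V) ∈ ((univ : Finset V).powersetCard 2).filter
        (fun s => ∃ x ∈ s, ∃ y ∈ s, s = {x, y} ∧ G.Adj a x ∧ G.Adj a y ∧ G.Adj x y) := by
    intro p hp
    simp only [mem_filter, mem_univ, true_and] at hp
    obtain ⟨h1, h2, h3⟩ := hp
    refine mem_filter.mpr ⟨Finset.mem_powersetCard.mpr ⟨subset_univ _, card_pair h3.ne⟩,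
      p.1, by simp, p.2, by simp, rfl, h1, h2, h3⟩
  rw [tri, Finset.card_eq_sum_card_fiberwise hmem]
  have hfib : ∀ s ∈ ((univ : Finset V).powersetCard 2).filter
      (fun s => ∃ x ∈ s, ∃ y ∈ s, s = {x, y} ∧ G.Adj a x ∧ G.Adj a y ∧ G.Adj x y),
      ((univ.filter fun p : V × V => G.Adj a p.1 ∧ G.Adj a p.2 ∧ G.Adj p.1 p.2).filter
        (fun p => ({p.1, p.2} : Finset V) = s)).card = 2 := by
    intro s hs
    simp only [mem_filter] at hs
    obtain ⟨-, x, -, y, -, rfl, hax, hay, hxy⟩ := hs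
    have hset : (univ.filter fun p : V × V => G.Adj a p.1 ∧ G.Adj a p.2 ∧ G.Adj p.1 p.2).filter
        (fun p => ({p.1, p.2} : Finset V) = {x, y}) = {(x, y), (y, x)} := by
      ext p
      obtain ⟨p1, p2⟩ := p
      simp only [mem_filter, mem_univ, true_and, mem_insert, mem_singleton, Prod.mk.injEq]
      constructor
      · rintro ⟨⟨h1, h2, h3⟩, hset⟩
        rcases pair_perm14 h3.ne hset with ⟨rfl, rfl⟩ | ⟨rfl, rfl⟩
        · exact Or.inl ⟨rfl, rfl⟩
        · exact Or.inr ⟨rfl, rfl⟩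
      · rintro (⟨rfl, rfl⟩ | ⟨rfl, rfl⟩)
        · exact ⟨⟨hax, hay, hxy⟩, rfl⟩
        · exact ⟨⟨hay, hax, hxy.symm⟩, Finset.pair_comm _ _⟩
    rw [hset, card_pair (by
      simp only [ne_eq, Prod.mk.injEq, not_and]
      intro h _; exact absurd h hxy.ne)]
  rw [Finset.sum_congr rfl hfib, Finset.sum_const, smul_eq_mul, mul_comm]

lemma tri_split14 (v a : V) (hva : G.Adj v a) :
    2 * tri G a = 2 * n3 G v a + (Pnov14 G v a).card := by
  classical
  have hsplit := Finset.card_filter_add_card_filter_not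
    (s := univ.filter fun p : V × V => G.Adj a p.1 ∧ G.Adj a p.2 ∧ G.Adj p.1 p.2)
    (p := fun p : V × V => p.1 = v ∨ p.2 = v)
  have hnov : ((univ.filter fun p : V × V => G.Adj a p.1 ∧ G.Adj a p.2 ∧ G.Adj p.1 p.2).filter
      fun p : V × V => ¬(p.1 = v ∨ p.2 = v)) = Pnov14 G v a := by
    ext p
    simp only [Pnov14, mem_filter, mem_univ, true_and, not_or]
    tauto
  have hv : ((univ.filter fun p : V × V => G.Adj a p.1 ∧ G.Adj a p.2 ∧ G.Adj p.1 p.2).filter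
      fun p : V × V => p.1 = v ∨ p.2 = v).card = 2 * n3 G v a := by
    rw [Finset.filter_or, Finset.card_union_of_disjoint (by
      rw [Finset.disjoint_left]
      rintro p hp1 hp2
      simp only [mem_filter, mem_univ, true_and] at hp1 hp2
      have : G.Adj v v := by
        have := hp1.1.2.2
        rw [hp1.2, hp2.2] at this
        exact this
      exact G.irrefl this)]
    have c1 : ((univ.filter fun p : V × V => G.Adj a p.1 ∧ G.Adj a p.2 ∧ G.Adj p.1 p.2).filter
        fun p : V × V => p.1 = v).card = n3 G v a := by
      rw [n3]
      apply Finset.card_nbij' (i := fun p => p.2) (j := fun x => (v, x))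
      · intro p hp
        simp only [Finset.mem_coe, mem_filter, mem_univ, true_and] at hp ⊢
        obtain ⟨⟨h1, h2, h3⟩, he⟩ := hp
        rw [he] at h3
        exact ⟨h3, h2⟩
      · intro x hx
        simp only [Finset.mem_coe, mem_filter, mem_univ, true_and] at hx ⊢
        exact ⟨⟨hva.symm, hx.2, hx.1⟩, trivial⟩
      · intro p hp
        simp only [Finset.mem_coe, mem_filter, mem_univ, true_and] at hp
        exact Prod.ext hp.2.symm rfl
      · intro x _
        rfl
    have c2 : ((univ.filter fun p : V × V => G.Adj a p.1 ∧ G.Adj a p.2 ∧ G.Adj p.1 p.2).filter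
        fun p : V × V => p.2 = v).card = n3 G v a := by
      rw [n3]
      apply Finset.card_nbij' (i := fun p => p.1) (j := fun x => (x, v))
      · intro p hp
        simp only [Finset.mem_coe, mem_filter, mem_univ, true_and] at hp ⊢
        obtain ⟨⟨h1, h2, h3⟩, he⟩ := hp
        rw [he] at h3
        exact ⟨h3.symm, h1⟩
      · intro x hx
        simp only [Finset.mem_coe, mem_filter, mem_univ, true_and] at hx ⊢
        exact ⟨⟨hx.2, hva.symm, hx.1.symm⟩, trivial⟩
      · intro p hp
        simp only [Finset.mem_coe, mem_filter, mem_univ, true_and] at hp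
        exact Prod.ext rfl hp.2.symm
      · intro x _
        rfl
    rw [c1, c2, two_mul]
  rw [← tri_two14, ← hsplit, hv, hnov]

lemma sum_Pnov14 [DecidableRel G.Adj] (v : V) :
    ∑ a ∈ G.neighborFinset v, (Pnov14 G v a).card = (T314 G v).card := by
  classical
  have hmem : ∀ t ∈ T314 G v, t.1 ∈ G.neighborFinset v := by
    intro t ht
    simp only [T314, mem_filter, mem_univ, true_and] at ht
    exact (SimpleGraph.mem_neighborFinset _ _ _).mpr ht.1
  rw [Finset.card_eq_sum_card_fiberwise hmem]
  apply Finset.sum_congr rfl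
  intro a ha
  have hva : G.Adj v a := (SimpleGraph.mem_neighborFinset _ _ _).mp ha
  apply Finset.card_nbij' (i := fun p => (a, p)) (j := fun t => t.2)
  · intro p hp
    simp only [Finset.mem_coe, Pnov14, mem_filter, mem_univ, true_and] at hp
    simp only [Finset.mem_coe, T314, mem_filter, mem_univ, true_and]
    exact ⟨⟨hva, hp.1, hp.2.1, hp.2.2.1, hp.2.2.2.1, hp.2.2.2.2⟩, trivial⟩
  · intro t ht
    simp only [Finset.mem_coe, T314, mem_filter, mem_univ, true_and] at ht
    obtain ⟨⟨h1, h2, h3, h4, h5, h6⟩, he⟩ := ht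
    simp only [Finset.mem_coe, Pnov14, mem_filter, mem_univ, true_and]
    rw [he] at h2 h3
    exact ⟨h2, h3, h4, h5, h6⟩
  · intro p _
    rfl
  · intro t ht
    simp only [Finset.mem_coe, T314, mem_filter, mem_univ, true_and] at ht
    exact Prod.ext ht.2.symm rfl

end Aux
section Aux2

lemma cnt3_mul14 (v : V) (P : V → V → V → Prop) (k : ℕ)
    (hd : ∀ a b c, P a b c → a ≠ b ∧ a ≠ c ∧ b ≠ c)
    (hk : ∀ a b c, P a b c → v ∉ ({a, b, c} : Finset V) →
      ((Wf14 v P).filter (fun t => ({t.1, t.2.1, t.2.2} : Finset V) = {a, b, c})).card = k) :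
    (Wf14 v P).card = k * cnt3 v P := by
  classical
  have hmem : ∀ t ∈ Wf14 v P,
      ({t.1, t.2.1, t.2.2} : Finset V) ∈ ((univ : Finset V).powersetCard 3).filter
        (fun s => v ∉ s ∧ ∃ a ∈ s, ∃ b ∈ s, ∃ c ∈ s, s = {a, b, c} ∧ P a b c) := by
    intro t ht
    simp only [Wf14, mem_filter, mem_univ, true_and] at ht
    obtain ⟨hP, hv⟩ := ht
    obtain ⟨h1, h2, h3⟩ := hd _ _ _ hP
    refine mem_filter.mpr ⟨Finset.mem_powersetCard.mpr ⟨subset_univ _, ?_⟩,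
      hv, t.1, by simp, t.2.1, by simp, t.2.2, by simp, rfl, hP⟩
    rw [Finset.card_insert_of_notMem (by simp [h1, h2]), card_pair h3]
  rw [cnt3, Finset.card_eq_sum_card_fiberwise hmem]
  have hfib : ∀ s ∈ ((univ : Finset V).powersetCard 3).filter
      (fun s => v ∉ s ∧ ∃ a ∈ s, ∃ b ∈ s, ∃ c ∈ s, s = {a, b, c} ∧ P a b c),
      ((Wf14 v P).filter (fun t => ({t.1, t.2.1, t.2.2} : Finset V) = s)).card = k := by
    intro s hs
    simp only [mem_filter] at hs
    obtain ⟨-, hvs, a, -, b, -, c, -, rfl, hP⟩ := hs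
    exact hk a b c hP hvs
  rw [Finset.sum_congr rfl hfib, Finset.sum_const, smul_eq_mul, mul_comm]

lemma fib8 (v a b c : V) (hP : P8pred G v a b c) (hv : v ∉ ({a, b, c} : Finset V)) :
    ((Wf14 v (P8pred G v)).filter
      (fun t => ({t.1, t.2.1, t.2.2} : Finset V) = {a, b, c})).card = 2 := by
  obtain ⟨hva, hab, hac, hbc, hvb, hvc⟩ := hP
  have hset : (Wf14 v (P8pred G v)).filter
      (fun t => ({t.1, t.2.1, t.2.2} : Finset V) = {a, b, c})
      = {(a, b, c), (a, c, b)} := by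
    ext t
    obtain ⟨t1, t2, t3⟩ := t
    simp only [Wf14, P8pred, mem_filter, mem_univ, true_and, mem_insert, mem_singleton,
      Prod.mk.injEq]
    constructor
    · rintro ⟨⟨⟨q1, q2, q3, q4, q5, q6⟩, -⟩, hst⟩
      rcases triple_perm14 q2.ne q3.ne q4.ne hst with
        ⟨rfl, rfl, rfl⟩ | ⟨rfl, rfl, rfl⟩ | ⟨rfl, rfl, rfl⟩ | ⟨rfl, rfl, rfl⟩ |
        ⟨rfl, rfl, rfl⟩ | ⟨rfl, rfl, rfl⟩
      · exact Or.inl ⟨rfl, rfl, rfl⟩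
      · exact Or.inr ⟨rfl, rfl, rfl⟩
      · exact absurd q1 hvb
      · exact absurd q1 hvb
      · exact absurd q1 hvc
      · exact absurd q1 hvc
    · rintro (⟨rfl, rfl, rfl⟩ | ⟨rfl, rfl, rfl⟩)
      · exact ⟨⟨⟨hva, hab, hac, hbc, hvb, hvc⟩, by simpa using hv⟩, rfl⟩
      · refine ⟨⟨⟨hva, hac, hab, hbc.symm, hvc, hvb⟩, ?_⟩, ?_⟩
        · simp only [mem_insert, mem_singleton] at hv ⊢
          tauto
        · ext x; simp only [mem_insert, mem_singleton]; tauto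
  rw [hset, card_pair (by
    simp only [ne_eq, Prod.mk.injEq, not_and]
    intro _ h _; exact absurd h hbc.ne)]

lemma fib9 (v a b c : V) (hP : P9pred G v a b c) (hv : v ∉ ({a, b, c} : Finset V)) :
    ((Wf14 v (P9pred G v)).filter
      (fun t => ({t.1, t.2.1, t.2.2} : Finset V) = {a, b, c})).card = 2 := by
  obtain ⟨hva, hvb, hab, hac, hbc, hvc⟩ := hP
  have hset : (Wf14 v (P9pred G v)).filter
      (fun t => ({t.1, t.2.1, t.2.2} : Finset V) = {a, b, c})
      = {(a, b, c), (b, a, c)} := by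
    ext t
    obtain ⟨t1, t2, t3⟩ := t
    simp only [Wf14, P9pred, mem_filter, mem_univ, true_and, mem_insert, mem_singleton,
      Prod.mk.injEq]
    constructor
    · rintro ⟨⟨⟨q1, q2, q3, q4, q5, q6⟩, -⟩, hst⟩
      rcases triple_perm14 q3.ne q4.ne q5.ne hst with
        ⟨rfl, rfl, rfl⟩ | ⟨rfl, rfl, rfl⟩ | ⟨rfl, rfl, rfl⟩ | ⟨rfl, rfl, rfl⟩ |
        ⟨rfl, rfl, rfl⟩ | ⟨rfl, rfl, rfl⟩
      · exact Or.inl ⟨rfl, rfl, rfl⟩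
      · exact absurd q2 hvc
      · exact Or.inr ⟨rfl, rfl, rfl⟩
      · exact absurd q2 hvc
      · exact absurd q1 hvc
      · exact absurd q1 hvc
    · rintro (⟨rfl, rfl, rfl⟩ | ⟨rfl, rfl, rfl⟩)
      · exact ⟨⟨⟨hva, hvb, hab, hac, hbc, hvc⟩, by simpa using hv⟩, rfl⟩
      · refine ⟨⟨⟨hvb, hva, hab.symm, hbc, hac, hvc⟩, ?_⟩, ?_⟩
        · simp only [mem_insert, mem_singleton] at hv ⊢
          tauto
        · ext x; simp only [mem_insert, mem_singleton]; tauto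
  rw [hset, card_pair (by
    simp only [ne_eq, Prod.mk.injEq, not_and]
    intro h _; exact absurd h hab.ne)]

set_option maxHeartbeats 1000000 in
lemma fib10 (v a b c : V) (hP : P10pred G v a b c) (hv : v ∉ ({a, b, c} : Finset V)) :
    ((Wf14 v (P10pred G v)).filter
      (fun t => ({t.1, t.2.1, t.2.2} : Finset V) = {a, b, c})).card = 6 := by
  obtain ⟨hva, hvb, hvc, hab, hac, hbc⟩ := hP
  have nab : a ≠ b := hab.ne
  have nba : b ≠ a := nab.symm
  have nac : a ≠ c := hac.ne
  have nca : c ≠ a := nac.symm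
  have nbc : b ≠ c := hbc.ne
  have ncb : c ≠ b := nbc.symm
  have hv3 : v ≠ a ∧ v ≠ b ∧ v ≠ c := by
    simp only [mem_insert, mem_singleton] at hv; tauto
  have hset : (Wf14 v (P10pred G v)).filter
      (fun t => ({t.1, t.2.1, t.2.2} : Finset V) = {a, b, c})
      = {(a, b, c), (a, c, b), (b, a, c), (b, c, a), (c, a, b), (c, b, a)} := by
    ext t
    obtain ⟨t1, t2, t3⟩ := t
    simp only [Wf14, P10pred, mem_filter, mem_univ, true_and, mem_insert, mem_singleton,
      Prod.mk.injEq]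
    constructor
    · rintro ⟨⟨⟨q1, q2, q3, q4, q5, q6⟩, -⟩, hst⟩
      rcases triple_perm14 q4.ne q5.ne q6.ne hst with
        ⟨rfl, rfl, rfl⟩ | ⟨rfl, rfl, rfl⟩ | ⟨rfl, rfl, rfl⟩ | ⟨rfl, rfl, rfl⟩ |
        ⟨rfl, rfl, rfl⟩ | ⟨rfl, rfl, rfl⟩
      · exact Or.inl ⟨rfl, rfl, rfl⟩
      · exact Or.inr (Or.inl ⟨rfl, rfl, rfl⟩)
      · exact Or.inr (Or.inr (Or.inl ⟨rfl, rfl, rfl⟩))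
      · exact Or.inr (Or.inr (Or.inr (Or.inl ⟨rfl, rfl, rfl⟩)))
      · exact Or.inr (Or.inr (Or.inr (Or.inr (Or.inl ⟨rfl, rfl, rfl⟩))))
      · exact Or.inr (Or.inr (Or.inr (Or.inr (Or.inr ⟨rfl, rfl, rfl⟩))))
    · rintro (⟨rfl, rfl, rfl⟩ | ⟨rfl, rfl, rfl⟩ | ⟨rfl, rfl, rfl⟩ | ⟨rfl, rfl, rfl⟩ |
        ⟨rfl, rfl, rfl⟩ | ⟨rfl, rfl, rfl⟩)
      · exact ⟨⟨⟨hva, hvb, hvc, hab, hac, hbc⟩, by simpa using hv⟩, rfl⟩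
      · refine ⟨⟨⟨hva, hvc, hvb, hac, hab, hbc.symm⟩, ?_⟩, ?_⟩
        · tauto
        · ext x; simp only [mem_insert, mem_singleton]; tauto
      · refine ⟨⟨⟨hvb, hva, hvc, hab.symm, hbc, hac⟩, ?_⟩, ?_⟩
        · tauto
        · ext x; simp only [mem_insert, mem_singleton]; tauto
      · refine ⟨⟨⟨hvb, hvc, hva, hbc, hab.symm, hac.symm⟩, ?_⟩, ?_⟩
        · tauto
        · ext x; simp only [mem_insert, mem_singleton]; tauto
      · refine ⟨⟨⟨hvc, hva, hvb, hac.symm, hbc.symm, hab⟩, ?_⟩, ?_⟩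
        · tauto
        · ext x; simp only [mem_insert, mem_singleton]; tauto
      · refine ⟨⟨⟨hvc, hvb, hva, hbc.symm, hac.symm, hab.symm⟩, ?_⟩, ?_⟩
        · tauto
        · ext x; simp only [mem_insert, mem_singleton]; tauto
  rw [hset]
  rw [Finset.card_insert_of_notMem (by simp [Prod.ext_iff, nab, nba, nac, nca, nbc, ncb]),
    Finset.card_insert_of_notMem (by simp [Prod.ext_iff, nab, nba, nac, nca, nbc, ncb]),
    Finset.card_insert_of_notMem (by simp [Prod.ext_iff, nab, nba, nac, nca, nbc, ncb]),
    Finset.card_insert_of_notMem (by simp [Prod.ext_iff, nab, nba, nac, nca, nbc, ncb]),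
    card_pair (by simp [Prod.ext_iff, nab, nba, nac, nca, nbc, ncb])]

end Aux2
section Aux3

lemma swap9 (v : V) :
    (Wf14 v fun a b c => P9pred G v a c b).card = (Wf14 v (P9pred G v)).card := by
  classical
  apply Finset.card_nbij' (i := fun t : V × V × V => (t.1, t.2.2, t.2.1))
    (j := fun t : V × V × V => (t.1, t.2.2, t.2.1))
  · intro t ht
    simp only [Finset.mem_coe, Wf14, mem_filter, mem_univ, true_and, mem_insert, mem_singleton] at ht ⊢
    tauto
  · intro t ht
    simp only [Finset.mem_coe, Wf14, mem_filter, mem_univ, true_and, mem_insert, mem_singleton] at ht ⊢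
    tauto
  · intro t _; rfl
  · intro t _; rfl

lemma T3_split14 (v : V) :
    (T314 G v).card = (Wf14 v (P10pred G v)).card + (Wf14 v (P9pred G v)).card
      + (Wf14 v fun a b c => P9pred G v a c b).card + (Wf14 v (P8pred G v)).card := by
  classical
  have e1 : Wf14 v (P10pred G v)
      = (T314 G v).filter (fun t => G.Adj v t.2.1 ∧ G.Adj v t.2.2) := by
    ext t
    simp only [Wf14, T314, P10pred, Finset.filter_filter, mem_filter, mem_univ, true_and,
      mem_insert, mem_singleton, not_or]
    constructor
    · rintro ⟨⟨h1, h2, h3, h4, h5, h6⟩, -⟩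
      exact ⟨⟨h1, h4, h5, h6, h2.ne', h3.ne'⟩, h2, h3⟩
    · rintro ⟨⟨h1, h2, h3, h4, h5, h6⟩, hb, hc⟩
      exact ⟨⟨h1, hb, hc, h2, h3, h4⟩, h1.ne, hb.ne, hc.ne⟩
  have e2 : Wf14 v (P9pred G v)
      = (T314 G v).filter (fun t => G.Adj v t.2.1 ∧ ¬G.Adj v t.2.2) := by
    ext t
    simp only [Wf14, T314, P9pred, Finset.filter_filter, mem_filter, mem_univ, true_and,
      mem_insert, mem_singleton, not_or]
    constructor
    · rintro ⟨⟨h1, h2, h3, h4, h5, h6⟩, hv1, hv2, hv3⟩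
      exact ⟨⟨h1, h3, h4, h5, h2.ne', fun h => hv3 h.symm⟩, h2, h6⟩
    · rintro ⟨⟨h1, h2, h3, h4, h5, h6⟩, hb, hc⟩
      exact ⟨⟨h1, hb, h2, h3, h4, hc⟩, h1.ne, hb.ne, fun h => h6 h.symm⟩
  have e3 : (Wf14 v fun a b c => P9pred G v a c b)
      = (T314 G v).filter (fun t => ¬G.Adj v t.2.1 ∧ G.Adj v t.2.2) := by
    ext t
    simp only [Wf14, T314, P9pred, Finset.filter_filter, mem_filter, mem_univ, true_and,
      mem_insert, mem_singleton, not_or]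
    constructor
    · rintro ⟨⟨h1, h2, h3, h4, h5, h6⟩, hv1, hv2, hv3⟩
      exact ⟨⟨h1, h4, h3, h5.symm, fun h => hv2 h.symm, h2.ne'⟩, h6, h2⟩
    · rintro ⟨⟨h1, h2, h3, h4, h5, h6⟩, hb, hc⟩
      exact ⟨⟨h1, hc, h3, h2, h4.symm, hb⟩, h1.ne, fun h => h5 h.symm, hc.ne⟩
  have e4 : Wf14 v (P8pred G v)
      = (T314 G v).filter (fun t => ¬G.Adj v t.2.1 ∧ ¬G.Adj v t.2.2) := by
    ext t
    simp only [Wf14, T314, P8pred, Finset.filter_filter, mem_filter, mem_univ, true_and,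
      mem_insert, mem_singleton, not_or]
    constructor
    · rintro ⟨⟨h1, h2, h3, h4, h5, h6⟩, hv1, hv2, hv3⟩
      exact ⟨⟨h1, h2, h3, h4, fun h => hv2 h.symm, fun h => hv3 h.symm⟩, h5, h6⟩
    · rintro ⟨⟨h1, h2, h3, h4, h5, h6⟩, hb, hc⟩
      exact ⟨⟨h1, h2, h3, h4, hb, hc⟩, h1.ne, fun h => h5 h.symm, fun h => h6 h.symm⟩
  rw [e1, e2, e3, e4]
  have h1 : ((T314 G v).filter fun t => G.Adj v t.2.1 ∧ G.Adj v t.2.2).card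
      + ((T314 G v).filter fun t => G.Adj v t.2.1 ∧ ¬G.Adj v t.2.2).card
      = ((T314 G v).filter fun t => G.Adj v t.2.1).card := by
    rw [← Finset.filter_filter, ← Finset.filter_filter]
    exact Finset.card_filter_add_card_filter_not (p := fun t : V × V × V => G.Adj v t.2.2)
  have h2 : ((T314 G v).filter fun t => ¬G.Adj v t.2.1 ∧ G.Adj v t.2.2).card
      + ((T314 G v).filter fun t => ¬G.Adj v t.2.1 ∧ ¬G.Adj v t.2.2).card
      = ((T314 G v).filter fun t => ¬G.Adj v t.2.1).card := by
    rw [← Finset.filter_filter, ← Finset.filter_filter]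
    exact Finset.card_filter_add_card_filter_not (p := fun t : V × V × V => G.Adj v t.2.2)
  have h3 : ((T314 G v).filter fun t => G.Adj v t.2.1).card
      + ((T314 G v).filter fun t => ¬G.Adj v t.2.1).card = (T314 G v).card :=
    Finset.card_filter_add_card_filter_not (p := fun t : V × V × V => G.Adj v t.2.1)
  omega

lemma hd8 (v : V) : ∀ a b c, P8pred G v a b c → a ≠ b ∧ a ≠ c ∧ b ≠ c :=
  fun _ _ _ h => ⟨h.2.1.ne, h.2.2.1.ne, h.2.2.2.1.ne⟩

lemma hd9 (v : V) : ∀ a b c, P9pred G v a b c → a ≠ b ∧ a ≠ c ∧ b ≠ c :=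
  fun _ _ _ h => ⟨h.2.2.1.ne, h.2.2.2.1.ne, h.2.2.2.2.1.ne⟩

lemma hd10 (v : V) : ∀ a b c, P10pred G v a b c → a ≠ b ∧ a ≠ c ∧ b ≠ c :=
  fun _ _ _ h => ⟨h.2.2.2.1.ne, h.2.2.2.2.1.ne, h.2.2.2.2.2.ne⟩

lemma T3_count14 (v : V) :
    (T314 G v).card = 6 * F10 G v + 2 * F9 G v + 2 * F9 G v + 2 * F8 G v := by
  rw [T3_split14, swap9,
    cnt3_mul14 v (P10pred G v) 6 (hd10 G v) (fib10 G v),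
    cnt3_mul14 v (P9pred G v) 2 (hd9 G v) (fib9 G v),
    cnt3_mul14 v (P8pred G v) 2 (hd8 G v) (fib8 G v),
    ← F8_eq14, ← F9_eq14, ← F10_eq14]

end Aux3
theorem statement14 [DecidableRel G.Adj] (v : V) :
    ∑ a ∈ G.neighborFinset v, ((tri G a : ℤ) - (n3 G v a : ℤ)) =
      (F8 G v : ℤ) + 2 * (F9 G v : ℤ) + 3 * (F10 G v : ℤ) := by
  classical
  have key : (2 : ℤ) * ∑ a ∈ G.neighborFinset v, ((tri G a : ℤ) - (n3 G v a : ℤ))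
      = 2 * ((F8 G v : ℤ) + 2 * (F9 G v : ℤ) + 3 * (F10 G v : ℤ)) := by
    rw [Finset.mul_sum]
    have step1 : ∀ a ∈ G.neighborFinset v,
        2 * ((tri G a : ℤ) - (n3 G v a : ℤ)) = ((Pnov14 G v a).card : ℤ) := by
      intro a ha
      have hva : G.Adj v a := (SimpleGraph.mem_neighborFinset _ _ _).mp ha
      have h := tri_split14 G v a hva
      have h' : (2 * tri G a : ℤ) = 2 * (n3 G v a : ℤ) + ((Pnov14 G v a).card : ℤ) := by
        exact_mod_cast h
      linarith
    rw [Finset.sum_congr rfl step1, ← Nat.cast_sum, sum_Pnov14, T3_count14]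
    push_cast
    ring
  exact mul_left_cancel₀ two_ne_zero key

end FourProfiles
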